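/- For every finite simple graph G, |corona(G)| + |ker(G)| ≤ 2·α(G) + k, where k is the number of odd cycles in G. -/

import Mathlib

variable {V : Type*} [Fintype V] [DecidableEq V]

/-- `S` is an independent set of `G`. -/
def IsIndep (G : SimpleGraph V) (S : Set V) : Prop :=
  ∀ ⦃u⦄, u ∈ S → ∀ ⦃v⦄, v ∈ S → ¬ G.Adj u v

/-- The independence number `α(G)`: the maximum cardinality of an independent set. -/
noncomputable def indepNum (G : SimpleGraph V) : ℕ :=
  sSup {n : ℕ | ∃ S : Set V, IsIndep G S ∧ S.ncard = n}

/-- `S` is a maximum independent set of `G`. -/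
def IsMaxIndep (G : SimpleGraph V) (S : Set V) : Prop :=
  IsIndep G S ∧ ∀ T : Set V, IsIndep G T → T.ncard ≤ S.ncard

/-- The neighborhood `N(X)` of a set of vertices `X`. -/
def nbhdSet (G : SimpleGraph V) (X : Set V) : Set V :=
  {v | ∃ u ∈ X, G.Adj u v}

/-- The difference `d_G(X) = |X| - |N(X)|` of a vertex set `X`. -/
noncomputable def diffSet (G : SimpleGraph V) (X : Set V) : ℤ :=
  (X.ncard : ℤ) - ((nbhdSet G X).ncard : ℤ)

/-- `I` is a critical independent set of `G`. -/
def IsCriticalIndep (G : SimpleGraph V) (I : Set V) : Prop :=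
  IsIndep G I ∧ ∀ J : Set V, IsIndep G J → diffSet G J ≤ diffSet G I

/-- `I` is a maximum-cardinality critical independent set of `G`. -/
def IsMaxCriticalIndep (G : SimpleGraph V) (I : Set V) : Prop :=
  IsCriticalIndep G I ∧ ∀ J : Set V, IsCriticalIndep G J → J.ncard ≤ I.ncard

/-- `core(G)`: the intersection of all maximum independent sets of `G`. -/
def coreSet (G : SimpleGraph V) : Set V := ⋂₀ {S : Set V | IsMaxIndep G S}

/-- `corona(G)`: the union of all maximum independent sets of `G`. -/
def coronaSet (G : SimpleGraph V) : Set V := ⋃₀ {S : Set V | IsMaxIndep G S}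

/-- `ker(G)`: the intersection of all critical independent sets of `G`. -/
def kerSet (G : SimpleGraph V) : Set V := ⋂₀ {S : Set V | IsCriticalIndep G S}

/-- `diadem(G)`: the union of all critical independent sets of `G`. -/
def diademSet (G : SimpleGraph V) : Set V := ⋃₀ {S : Set V | IsCriticalIndep G S}

/-- `nucleus(G)`: the intersection of all maximum-cardinality critical independent
sets of `G`. -/
def nucleusSet (G : SimpleGraph V) : Set V := ⋂₀ {S : Set V | IsMaxCriticalIndep G S}

/-- `C` is the vertex set of some odd cycle of `G`. -/
def IsOddCycleVertexSet (G : SimpleGraph V) (C : Set V) : Prop :=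
  ∃ (v : V) (w : G.Walk v v), w.IsCycle ∧ Odd w.length ∧ {x | x ∈ w.support} = C

/-- The maximum cardinality of a set of pairwise vertex-distinct odd cycles of `G`,
i.e. the number of distinct vertex sets of odd cycles of `G`. -/
noncomputable def numVertexDistinctOddCycles (G : SimpleGraph V) : ℕ :=
  {C : Set V | IsOddCycleVertexSet G C}.ncard

/-- `E` is the edge set of some odd cycle of `G`. -/
def IsOddCycleEdgeSet (G : SimpleGraph V) (E : Set (Sym2 V)) : Prop :=
  ∃ (v : V) (w : G.Walk v v), w.IsCycle ∧ Odd w.length ∧ {e | e ∈ w.edges} = E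

/-- The number of (distinct) odd cycles of `G`, where a cycle is identified with
its edge set. -/
noncomputable def numOddCycles (G : SimpleGraph V) : ℕ :=
  {E : Set (Sym2 V) | IsOddCycleEdgeSet G E}.ncard

section Aux

open SimpleGraph Set

variable {W : Type*} [Fintype W] [DecidableEq W]

lemma isIndep_subset {G : SimpleGraph W} {S T : Set W} (h : IsIndep G T) (hs : S ⊆ T) :
    IsIndep G S := fun _ hu _ hv => h (hs hu) (hs hv)

lemma isIndep_empty (G : SimpleGraph W) : IsIndep G (∅ : Set W) :=
  fun u hu => absurd hu (Set.notMem_empty u)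

lemma indepNum_bddAbove (G : SimpleGraph W) :
    BddAbove {n : ℕ | ∃ S : Set W, IsIndep G S ∧ S.ncard = n} := by
  refine ⟨Fintype.card W, ?_⟩
  rintro n ⟨S, _, rfl⟩
  calc S.ncard ≤ (Set.univ : Set W).ncard := Set.ncard_le_ncard (Set.subset_univ S)
    _ = Fintype.card W := by rw [Set.ncard_univ, Nat.card_eq_fintype_card]

lemma le_indepNum {G : SimpleGraph W} {S : Set W} (h : IsIndep G S) :
    S.ncard ≤ _root_.indepNum G := le_csSup (indepNum_bddAbove G) ⟨S, h, rfl⟩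

lemma exists_isCriticalIndep (G : SimpleGraph W) : ∃ I, IsCriticalIndep G I := by
  obtain ⟨I, hI, hmax⟩ := Set.exists_max_image {S : Set W | IsIndep G S} (diffSet G)
    (Set.toFinite _) ⟨∅, isIndep_empty G⟩
  exact ⟨I, hI, fun J hJ => hmax J hJ⟩

lemma exists_min_critical (G : SimpleGraph W) :
    ∃ I, IsCriticalIndep G I ∧ ∀ J, IsCriticalIndep G J → I.ncard ≤ J.ncard := by
  obtain ⟨I, hI, hmin⟩ := Set.exists_min_image {S : Set W | IsCriticalIndep G S} Set.ncard
    (Set.toFinite _) (exists_isCriticalIndep G)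
  exact ⟨I, hI, fun J hJ => hmin J hJ⟩

end Aux
section Hall
set_option linter.unusedSectionVars false
open SimpleGraph Set

variable {W : Type*} [Fintype W] [DecidableEq W]

lemma strictHall {G : SimpleGraph W} {I B : Set W}
    (hI : IsCriticalIndep G I) (hmin : ∀ J, IsCriticalIndep G J → I.ncard ≤ J.ncard)
    (hBsub : B ⊆ nbhdSet G I) (hBne : B.Nonempty) :
    B.ncard + 1 ≤ (nbhdSet G B ∩ I).ncard := by
  by_contra hlt
  push_neg at hlt
  have hle : (nbhdSet G B ∩ I).ncard ≤ B.ncard := by omega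
  set NB := nbhdSet G B with hNB
  set I2 := I \ NB with hI2
  have hI2indep : IsIndep G I2 := isIndep_subset hI.1 diff_subset
  have hIeq : I \ NB = I \ (NB ∩ I) := by
    ext x; simp only [mem_diff, mem_inter_iff]; tauto
  have hsub1 : (NB ∩ I) ⊆ I := inter_subset_right
  have hcard2 : I2.ncard = I.ncard - (NB ∩ I).ncard := by
    rw [hI2, hIeq, Set.ncard_diff hsub1]
  have hNsub : nbhdSet G I2 ⊆ nbhdSet G I \ B := by
    rintro x ⟨u, hu, hadj⟩
    exact ⟨⟨u, hu.1, hadj⟩, fun hxB => hu.2 ⟨x, hxB, hadj.symm⟩⟩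
  have hNcard : (nbhdSet G I2).ncard ≤ (nbhdSet G I).ncard - B.ncard := by
    calc (nbhdSet G I2).ncard ≤ (nbhdSet G I \ B).ncard := Set.ncard_le_ncard hNsub
      _ = (nbhdSet G I).ncard - B.ncard := Set.ncard_diff hBsub
  have hNBI : (NB ∩ I).Nonempty := by
    obtain ⟨b, hb⟩ := hBne
    obtain ⟨u, huI, hadj⟩ := hBsub hb
    exact ⟨u, ⟨b, hb, hadj.symm⟩, huI⟩
  have h1 : 1 ≤ (NB ∩ I).ncard := (Set.ncard_pos (Set.toFinite _)).mpr hNBI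
  have hle2 : (NB ∩ I).ncard ≤ I.ncard := Set.ncard_le_ncard hsub1
  have hBN : B.ncard ≤ (nbhdSet G I).ncard := Set.ncard_le_ncard hBsub
  have hd : diffSet G I ≤ diffSet G I2 := by
    unfold diffSet
    have c1 : ((I2.ncard : ℤ)) = (I.ncard : ℤ) - ((NB ∩ I).ncard : ℤ) := by
      rw [hcard2]; push_cast [Nat.cast_sub hle2]; ring
    have c2 : ((nbhdSet G I2).ncard : ℤ) ≤ ((nbhdSet G I).ncard : ℤ) - (B.ncard : ℤ) := by
      rw [← Nat.cast_sub hBN]; exact_mod_cast hNcard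
    have c3 : ((NB ∩ I).ncard : ℤ) ≤ (B.ncard : ℤ) := by exact_mod_cast hle
    linarith
  have hI2crit : IsCriticalIndep G I2 := ⟨hI2indep, fun J hJ => (hI.2 J hJ).trans hd⟩
  have := hmin I2 hI2crit
  omega

lemma maxIndep_inter_nbhd_empty {G : SimpleGraph W} {I T : Set W}
    (hI : IsCriticalIndep G I) (hmin : ∀ J, IsCriticalIndep G J → I.ncard ≤ J.ncard)
    (hT : IsMaxIndep G T) : T ∩ nbhdSet G I = ∅ := by
  by_contra hne
  have hBne : (T ∩ nbhdSet G I).Nonempty := Set.nonempty_iff_ne_empty.mpr hne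
  set B := T ∩ nbhdSet G I with hB
  have hBsub : B ⊆ nbhdSet G I := inter_subset_right
  have hSH := strictHall hI hmin hBsub hBne
  have h2 : nbhdSet G B ∩ I ⊆ I \ T := by
    rintro x ⟨⟨b, hbB, hadj⟩, hxI⟩
    exact ⟨hxI, fun hxT => hT.1 hbB.1 hxT hadj⟩
  have h3 : (nbhdSet G B ∩ I).ncard ≤ (I \ T).ncard := Set.ncard_le_ncard h2
  set W0 := (T \ nbhdSet G I) ∪ I with hW0
  have hW0indep : IsIndep G W0 := by
    rintro u hu v hv hadj
    rcases hu with hu | hu <;> rcases hv with hv | hv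
    · exact hT.1 hu.1 hv.1 hadj
    · exact hu.2 ⟨v, hv, hadj.symm⟩
    · exact hv.2 ⟨u, hu, hadj⟩
    · exact hI.1 hu hv hadj
  have hW0le : W0.ncard ≤ T.ncard := hT.2 W0 hW0indep
  have hdisj : Disjoint (T \ nbhdSet G I) (I \ T) := by
    rw [Set.disjoint_left]; rintro x ⟨hxT, _⟩ ⟨_, hxnT⟩; exact hxnT hxT
  have hsub3 : (T \ nbhdSet G I) ∪ (I \ T) ⊆ W0 :=
    Set.union_subset_union_right _ diff_subset
  have h4 : (T \ nbhdSet G I).ncard + (I \ T).ncard ≤ W0.ncard := by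
    rw [← Set.ncard_union_eq hdisj]; exact Set.ncard_le_ncard hsub3
  have h5 : T \ nbhdSet G I = T \ B := by
    ext x; simp only [mem_diff, hB, mem_inter_iff]; tauto
  have h6 : (T \ B).ncard = T.ncard - B.ncard := Set.ncard_diff inter_subset_left
  have hBT : B.ncard ≤ T.ncard := Set.ncard_le_ncard inter_subset_left
  rw [h5, h6] at h4
  omega

lemma corona_subset_compl_nbhd {G : SimpleGraph W} {I : Set W}
    (hI : IsCriticalIndep G I) (hmin : ∀ J, IsCriticalIndep G J → I.ncard ≤ J.ncard) :
    coronaSet G ⊆ (nbhdSet G I)ᶜ := by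
  rintro x ⟨T, hT, hxT⟩ hxN
  have := maxIndep_inter_nbhd_empty hI hmin hT
  exact absurd (by rw [← this]; exact ⟨hxT, hxN⟩ : x ∈ (∅ : Set W)) (Set.notMem_empty x)
end Hall
section Walks
set_option linter.unusedSectionVars false
open SimpleGraph Set

variable {W : Type*} [Fintype W] [DecidableEq W]

lemma closed_walk_support_nodup {G : SimpleGraph W} {u : W} {w : G.Walk u u}
    (h : w.support.Nodup) : w = SimpleGraph.Walk.nil := by
  cases w with
  | nil => rfl
  | cons h' p =>
    exfalso
    rw [SimpleGraph.Walk.support_cons, List.nodup_cons] at h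
    exact h.1 p.end_mem_support

lemma exists_odd_cycle_of_odd_closed_walk {G : SimpleGraph W} :
    ∀ (n : ℕ) (u : W) (w : G.Walk u u), w.length = n → Odd w.length →
    ∃ (v : W) (c : G.Walk v v), c.IsCycle ∧ Odd c.length := by
  intro n
  induction n using Nat.strong_induction_on with
  | _ n IH =>
  intro u w hlen hodd
  cases w with
  | nil => simp [Nat.odd_iff] at hodd
  | @cons _ b _ hadj r =>
    by_cases hnd : r.support.Nodup
    · have hpath : r.IsPath := (SimpleGraph.Walk.isPath_def r).mpr hnd
      by_cases he : s(u, b) ∈ r.edges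
      · exfalso
        cases r with
        | nil => exact hadj.ne rfl
        | @cons _ c _ hadj2 r2 =>
          rw [SimpleGraph.Walk.edges_cons, List.mem_cons] at he
          rw [SimpleGraph.Walk.support_cons, List.nodup_cons] at hnd
          rcases he with he | he
          · have hcu : c = u := by
              rcases Sym2.eq_iff.mp he with ⟨h1, h2⟩ | ⟨h1, h2⟩
              · exact absurd h1 hadj.ne
              · first | exact h1 | exact h2 | exact h1.symm | exact h2.symm
            subst hcu
            have h2 := closed_walk_support_nodup hnd.2
            subst h2
            simp [SimpleGraph.Walk.length_cons, Nat.odd_iff] at hodd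
          · exact hnd.1 (SimpleGraph.Walk.snd_mem_support_of_mem_edges r2 he)
      · exact ⟨u, SimpleGraph.Walk.cons hadj r,
          (SimpleGraph.Walk.cons_isCycle_iff r hadj).mpr ⟨hpath, he⟩, hodd⟩
    · -- duplicate vertex in r.support
      obtain ⟨x, hx⟩ : ∃ x, 2 ≤ List.count x r.support := by
        by_contra hcon
        push_neg at hcon
        exact hnd (List.nodup_iff_count_le_one.mpr (fun a => by have := hcon a; omega))
      have hxmem : x ∈ r.support := by
        rw [← List.count_pos_iff]; omega
      have hspec := r.take_spec hxmem
      set r1 := r.takeUntil x hxmem with hr1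
      set r2 := r.dropUntil x hxmem with hr2
      have hcount1 : List.count x r1.support = 1 := r.count_support_takeUntil_eq_one hxmem
      have hsupp : r.support = r1.support ++ r2.support.tail := by
        rw [← hspec, SimpleGraph.Walk.support_append]
      have hcount2 : 1 ≤ List.count x r2.support.tail := by
        rw [hsupp, List.count_append] at hx; omega
      have hxtail : x ∈ r2.support.tail := by
        rw [← List.count_pos_iff]; omega
      have hr2nn : ¬ r2.Nil := by
        intro hnil
        have hlen0 : r2.length = 0 := SimpleGraph.Walk.nil_iff_length_eq.mp hnil
        have hsl := r2.length_support
        rw [hlen0] at hsl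
        have : r2.support.tail.length = 0 := by
          rw [List.length_tail, hsl]
        rw [List.eq_nil_of_length_eq_zero this] at hxtail
        simp at hxtail
      obtain ⟨y, hadj2, q, hq⟩ := SimpleGraph.Walk.not_nil_iff.mp hr2nn
      have hxq : x ∈ q.support := by
        rw [hq, SimpleGraph.Walk.support_cons, List.tail_cons] at hxtail
        exact hxtail
      set mid : G.Walk x x := SimpleGraph.Walk.cons hadj2 (q.takeUntil x hxq) with hmid
      set rest := q.dropUntil x hxq with hrest
      set outer : G.Walk u u := SimpleGraph.Walk.cons hadj (r1.append rest) with houter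
      have hqlen : (q.takeUntil x hxq).length + rest.length = q.length := by
        have := congrArg SimpleGraph.Walk.length (q.take_spec hxq)
        rwa [SimpleGraph.Walk.length_append] at this
      have hrlen : r1.length + r2.length = r.length := by
        have := congrArg SimpleGraph.Walk.length hspec
        rwa [SimpleGraph.Walk.length_append] at this
      have hr2len : r2.length = q.length + 1 := by
        rw [hq, SimpleGraph.Walk.length_cons]
      have hsum : outer.length + mid.length = n := by
        rw [houter, hmid]
        simp only [SimpleGraph.Walk.length_cons, SimpleGraph.Walk.length_append]
        rw [← hlen, SimpleGraph.Walk.length_cons]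
        omega
      have hmidpos : 1 ≤ mid.length := by rw [hmid]; simp [SimpleGraph.Walk.length_cons]
      have houtpos : 1 ≤ outer.length := by rw [houter]; simp [SimpleGraph.Walk.length_cons]
      rcases Nat.even_or_odd outer.length with hev | hod
      · have hmidodd : Odd mid.length := by
          rcases hev with ⟨a, ha⟩; rcases hodd with ⟨m, hm⟩
          rw [hlen] at hm
          refine ⟨m - a, by omega⟩
        exact IH mid.length (by omega) x mid rfl hmidodd
      · exact IH outer.length (by omega) u outer rfl hod

end Walks
section Coloring
set_option linter.unusedSectionVars false
open SimpleGraph Set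

variable {W : Type*} [Fintype W] [DecidableEq W]

lemma parity_unique {G : SimpleGraph W}
    (hnw : ∀ (u : W) (w : G.Walk u u), ¬ Odd w.length)
    {a b : W} (p q : G.Walk a b) : (Odd p.length ↔ Odd q.length) := by
  have h := hnw a (p.append q.reverse)
  rw [SimpleGraph.Walk.length_append, SimpleGraph.Walk.length_reverse, Nat.odd_add] at h
  rw [← Nat.not_odd_iff_even] at h
  tauto

lemma exists_two_coloring {G : SimpleGraph W}
    (hnc : ¬ ∃ (v : W) (c : G.Walk v v), c.IsCycle ∧ Odd c.length) :
    ∃ c : W → Bool, ∀ {a b : W}, G.Adj a b → c a ≠ c b := by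
  have hnw : ∀ (u : W) (w : G.Walk u u), ¬ Odd w.length := by
    intro u w hodd
    exact hnc (exists_odd_cycle_of_odd_closed_walk w.length u w rfl hodd)
  classical
  let rt : W → W := fun v => (G.connectedComponentMk v).out
  have hrt_eq : ∀ v : W, G.connectedComponentMk (rt v) = G.connectedComponentMk v := by
    intro v
    exact (G.connectedComponentMk v).out_eq
  have hreach : ∀ v, G.Reachable v (rt v) := fun v =>
    (SimpleGraph.ConnectedComponent.exact (hrt_eq v)).symm
  let wk : ∀ v : W, G.Walk v (rt v) := fun v => (hreach v).some
  refine ⟨fun v => decide (Odd (wk v).length), ?_⟩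
  intro a b hab hEq
  have hrtab : rt b = rt a := by
    show (G.connectedComponentMk b).out = (G.connectedComponentMk a).out
    rw [SimpleGraph.ConnectedComponent.connectedComponentMk_eq_of_adj hab]
  have hpq := parity_unique hnw (wk a) (SimpleGraph.Walk.cons hab ((wk b).copy rfl hrtab))
  rw [SimpleGraph.Walk.length_cons, SimpleGraph.Walk.length_copy] at hpq
  have hde : (Odd (wk a).length ↔ Odd (wk b).length) := decide_eq_decide.mp hEq
  rw [Nat.odd_add_one] at hpq
  tauto

end Coloring
section L1
set_option linter.unusedSectionVars false
open SimpleGraph Set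

variable {W : Type*} [Fintype W] [DecidableEq W]

lemma exists_support_not_mem {G : SimpleGraph W} {u : W} {w : G.Walk u u}
    (hw : w.IsCycle) {I : Set W} (hI : IsIndep G I) : ∃ x ∈ w.support, x ∉ I := by
  cases w with
  | nil => exact absurd hw SimpleGraph.Walk.IsCycle.not_of_nil
  | @cons _ y _ ha p =>
    by_contra hcon
    push_neg at hcon
    have h1 : u ∈ (SimpleGraph.Walk.cons ha p).support :=
      SimpleGraph.Walk.start_mem_support _
    have h2 : y ∈ (SimpleGraph.Walk.cons ha p).support := by
      rw [SimpleGraph.Walk.support_cons]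
      exact List.mem_cons_of_mem _ p.start_mem_support
    exact hI (hcon _ h1) (hcon _ h2) ha

lemma L1 : ∀ (n : ℕ) {W : Type*} [Fintype W] [DecidableEq W] (G : SimpleGraph W),
    Fintype.card W = n → ∀ (I : Set W), IsCriticalIndep G I →
    (Fintype.card W : ℤ) + diffSet G I ≤ 2 * (_root_.indepNum G : ℤ) + (numOddCycles G : ℤ) := by
  intro n
  induction n using Nat.strong_induction_on with
  | _ n IH =>
  intro W _ _ G hn I hI
  by_cases hcyc : ∃ (v : W) (w : G.Walk v v), w.IsCycle ∧ Odd w.length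
  · -- there is an odd cycle
    obtain ⟨v0, w, hw, hodd⟩ := hcyc
    obtain ⟨v, hvsup, hvI⟩ := exists_support_not_mem hw hI.1
    have hpos : 1 ≤ n := by
      rw [← hn]
      exact Fintype.card_pos_iff.mpr ⟨v⟩
    set s : Set W := {v}ᶜ with hs
    haveI : Fintype ↥s := Fintype.ofFinite _
    have hcards : Fintype.card ↥s = n - 1 := by
      rw [← Nat.card_eq_fintype_card, Nat.card_coe_set_eq]
      have h1 := Set.ncard_add_ncard_compl ({v} : Set W)
      rw [Set.ncard_singleton] at h1
      rw [← hs] at h1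
      have h2 : Nat.card W = n := by rw [Nat.card_eq_fintype_card, hn]
      omega
    obtain ⟨I', hI'⟩ := exists_isCriticalIndep (G.induce s)
    have IH' := IH (n-1) (by omega) (G.induce s) hcards I' hI'
    -- (a) diffSet G I ≤ diffSet G' I'
    have hIs : I ⊆ s := by
      intro x hx
      simp only [hs, Set.mem_compl_iff, Set.mem_singleton_iff]
      rintro rfl; exact hvI hx
    have hdiff2 : diffSet G I ≤ diffSet (G.induce s) I' := by
      set I0 : Set ↥s := Subtype.val ⁻¹' I with hI0
      have hval : Subtype.val '' I0 = I :=
        Set.image_preimage_eq_of_subset (by rw [Subtype.range_coe]; exact hIs)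
      have hI0indep : IsIndep (G.induce s) I0 := by
        intro a ha b hb hab
        exact hI.1 ha hb hab
      have hI0card : I0.ncard = I.ncard := by
        rw [← hval, Set.ncard_image_of_injective _ Subtype.val_injective]
      have hN0 : (nbhdSet (G.induce s) I0).ncard ≤ (nbhdSet G I).ncard := by
        have hsub : Subtype.val '' nbhdSet (G.induce s) I0 ⊆ nbhdSet G I := by
          rintro x ⟨a, ⟨u', hu', hadj⟩, rfl⟩
          exact ⟨↑u', hu', hadj⟩
        calc (nbhdSet (G.induce s) I0).ncard
            = (Subtype.val '' nbhdSet (G.induce s) I0).ncard :=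
              (Set.ncard_image_of_injective _ Subtype.val_injective).symm
          _ ≤ (nbhdSet G I).ncard := Set.ncard_le_ncard hsub
      have hd1 : diffSet G I ≤ diffSet (G.induce s) I0 := by
        unfold diffSet
        rw [hI0card]
        have : ((nbhdSet (G.induce s) I0).ncard : ℤ) ≤ ((nbhdSet G I).ncard : ℤ) := by
          exact_mod_cast hN0
        linarith
      exact hd1.trans (hI'.2 I0 hI0indep)
    -- (b) indepNum
    have hα : _root_.indepNum (G.induce s) ≤ _root_.indepNum G := by
      apply csSup_le_csSup (indepNum_bddAbove G)
      · exact ⟨0, ∅, isIndep_empty _, by simp⟩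
      · rintro m ⟨S', hS', rfl⟩
        refine ⟨Subtype.val '' S', ?_, Set.ncard_image_of_injective _ Subtype.val_injective⟩
        rintro x ⟨a, ha, rfl⟩ y ⟨b, hb, rfl⟩ hxy
        exact hS' ha hb hxy
    -- (c) odd cycles count
    set Ew : Set (Sym2 W) := {e | e ∈ w.edges} with hEw
    have hEwA : Ew ∈ {E : Set (Sym2 W) | IsOddCycleEdgeSet G E} := ⟨v0, w, hw, hodd, rfl⟩
    have hvedge : ∃ e ∈ w.edges, v ∈ e := by
      have hnn : ¬ (w.rotate v hvsup).Nil := (hw.rotate hvsup).not_nil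
      obtain ⟨y, ha, q, hq⟩ := SimpleGraph.Walk.not_nil_iff.mp hnn
      have he : s(v, y) ∈ (w.rotate v hvsup).edges := by
        rw [hq, SimpleGraph.Walk.edges_cons]; exact List.mem_cons_self
      exact ⟨s(v,y), (w.rotate_edges v hvsup).mem_iff.mp he, Sym2.mem_mk_left _ _⟩
    have hinj2 : Function.Injective (Sym2.map (Subtype.val : ↥s → W)) :=
      Sym2.map.injective Subtype.val_injective
    have hcoe : ⇑(SimpleGraph.Embedding.induce s (G := G)).toHom = (Subtype.val : ↥s → W) := rfl
    have hmapsub : (fun E => Sym2.map (Subtype.val : ↥s → W) '' E) ''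
        {E | IsOddCycleEdgeSet (G.induce s) E}
        ⊆ {E : Set (Sym2 W) | IsOddCycleEdgeSet G E} \ {Ew} := by
      rintro E ⟨E', ⟨v', w', hw', hodd', hE'⟩, rfl⟩
      have hinjhom : Function.Injective ⇑(SimpleGraph.Embedding.induce s (G := G)).toHom := by
        rw [hcoe]; exact Subtype.val_injective
      constructor
      · refine ⟨_, w'.map (SimpleGraph.Embedding.induce s (G := G)).toHom,
          (SimpleGraph.Walk.map_isCycle_iff_of_injective hinjhom).mpr hw', ?_, ?_⟩
        · rw [SimpleGraph.Walk.length_map]; exact hodd'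
        · ext e
          simp only [Set.mem_setOf_eq, SimpleGraph.Walk.edges_map, List.mem_map, hcoe,
            ← hE', Set.mem_image]
      · intro hmem
        rw [Set.mem_singleton_iff] at hmem
        obtain ⟨e0, he0, hve0⟩ := hvedge
        have : e0 ∈ Sym2.map (Subtype.val : ↥s → W) '' E' := by
          rw [show Sym2.map (Subtype.val : ↥s → W) '' E' = Ew from hmem]; exact he0
        obtain ⟨e', _, rfl⟩ := this
        obtain ⟨a, _, ha⟩ := Sym2.mem_map.mp hve0
        exact a.2 (by rw [Set.mem_singleton_iff, ← ha])
    have hkk : numOddCycles (G.induce s) + 1 ≤ numOddCycles G := by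
      have h1 : ((fun E => Sym2.map (Subtype.val : ↥s → W) '' E) ''
          {E | IsOddCycleEdgeSet (G.induce s) E}).ncard
          = {E | IsOddCycleEdgeSet (G.induce s) E}.ncard :=
        Set.ncard_image_of_injective _ (Set.image_injective.mpr hinj2)
      have h2 : ({E : Set (Sym2 W) | IsOddCycleEdgeSet G E} \ {Ew}).ncard
          = {E : Set (Sym2 W) | IsOddCycleEdgeSet G E}.ncard - 1 := by
        rw [Set.ncard_diff (Set.singleton_subset_iff.mpr hEwA), Set.ncard_singleton]
      have h3 := Set.ncard_le_ncard hmapsub (Set.toFinite _)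
      have h4 : 1 ≤ {E : Set (Sym2 W) | IsOddCycleEdgeSet G E}.ncard :=
        (Set.ncard_pos (Set.toFinite _)).mpr ⟨Ew, hEwA⟩
      unfold numOddCycles
      omega
    -- final chain
    rw [hn]
    have hfin : ((Fintype.card ↥s : ℕ) : ℤ) = (n : ℤ) - 1 := by
      rw [hcards]; push_cast [hpos]; ring
    rw [hfin] at IH'
    have c1 : (numOddCycles (G.induce s) : ℤ) + 1 ≤ (numOddCycles G : ℤ) := by
      exact_mod_cast hkk
    have c2 : (_root_.indepNum (G.induce s) : ℤ) ≤ (_root_.indepNum G : ℤ) := by exact_mod_cast hα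
    linarith
  · -- no odd cycle: bipartite-type argument
    obtain ⟨c, hc⟩ := exists_two_coloring hcyc
    have hIsub : I ⊆ (nbhdSet G I)ᶜ := by
      intro x hx hmem
      obtain ⟨u', hu', hadj⟩ := hmem
      exact hI.1 hu' hx hadj
    set Z := (nbhdSet G I)ᶜ \ I with hZdef
    have hindep : ∀ bb : Bool, IsIndep G (I ∪ {x ∈ Z | c x = bb}) := by
      intro bb x hx y hy hadj
      rcases hx with hx | hx <;> rcases hy with hy | hy
      · exact hI.1 hx hy hadj
      · exact hy.1.1 ⟨x, hx, hadj⟩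
      · exact hx.1.1 ⟨y, hy, hadj.symm⟩
      · exact hc hadj (hx.2.trans hy.2.symm)
    have hcard : ∀ bb : Bool, I.ncard + {x ∈ Z | c x = bb}.ncard ≤ _root_.indepNum G := by
      intro bb
      have hd : Disjoint I {x ∈ Z | c x = bb} := by
        rw [Set.disjoint_left]
        rintro x hxI ⟨⟨_, hxnI⟩, _⟩
        exact hxnI hxI
      rw [← Set.ncard_union_eq hd]
      exact le_indepNum (hindep bb)
    have hsplit : Z.ncard ≤ {x ∈ Z | c x = true}.ncard + {x ∈ Z | c x = false}.ncard := by
      refine le_trans (Set.ncard_le_ncard ?_) (Set.ncard_union_le _ _)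
      intro x hx
      rcases Bool.eq_false_or_eq_true (c x) with hb | hb
      · left; exact ⟨hx, hb⟩
      · right; exact ⟨hx, hb⟩

    have hZcard : Z.ncard = (nbhdSet G I)ᶜ.ncard - I.ncard := Set.ncard_diff hIsub
    have hcompl : (nbhdSet G I).ncard + (nbhdSet G I)ᶜ.ncard = Nat.card W :=
      Set.ncard_add_ncard_compl _
    have hIle : I.ncard ≤ (nbhdSet G I)ᶜ.ncard := Set.ncard_le_ncard hIsub
    have hk0 : (0:ℤ) ≤ (numOddCycles G : ℤ) := by positivity
    unfold diffSet
    have hcw : Nat.card W = Fintype.card W := Nat.card_eq_fintype_card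
    have e1 := hcard true
    have e2 := hcard false
    have h1' : ((Z.ncard : ℤ)) = ((nbhdSet G I)ᶜ.ncard : ℤ) - (I.ncard : ℤ) := by
      rw [hZcard]; push_cast [hIle]; ring
    have h2' : ((nbhdSet G I).ncard : ℤ) + ((nbhdSet G I)ᶜ.ncard : ℤ) = (Fintype.card W : ℤ) := by
      rw [← hcw]; exact_mod_cast hcompl
    have e1' : (I.ncard : ℤ) + ({x ∈ Z | c x = true}.ncard : ℤ) ≤ (_root_.indepNum G : ℤ) := by
      exact_mod_cast e1
    have e2' : (I.ncard : ℤ) + ({x ∈ Z | c x = false}.ncard : ℤ) ≤ (_root_.indepNum G : ℤ) := by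
      exact_mod_cast e2
    have hsplit' : (Z.ncard : ℤ) ≤ ({x ∈ Z | c x = true}.ncard : ℤ) +
        ({x ∈ Z | c x = false}.ncard : ℤ) := by exact_mod_cast hsplit
    linarith

end L1

/-- For every finite simple graph `G`,
`|corona(G)| + |ker(G)| ≤ 2·α(G) + k`, where `k` is the number of odd cycles of `G`. -/
theorem corona_ker_le_two_alpha_add_numOddCycles (G : SimpleGraph V) :
    (coronaSet G).ncard + (kerSet G).ncard ≤ 2 * indepNum G + numOddCycles G := by
  obtain ⟨I, hI, hmin⟩ := exists_min_critical G
  have hker : kerSet G ⊆ I := Set.sInter_subset_of_mem hI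
  have hcor : coronaSet G ⊆ (nbhdSet G I)ᶜ := corona_subset_compl_nbhd hI hmin
  have h1 : (coronaSet G).ncard ≤ (nbhdSet G I)ᶜ.ncard := Set.ncard_le_ncard hcor
  have h2 : (kerSet G).ncard ≤ I.ncard := Set.ncard_le_ncard hker
  have hL1 := L1 (Fintype.card V) G rfl I hI
  have hcompl : (nbhdSet G I).ncard + (nbhdSet G I)ᶜ.ncard = Nat.card V :=
    Set.ncard_add_ncard_compl _
  have hcw : Nat.card V = Fintype.card V := Nat.card_eq_fintype_card
  unfold diffSet at hL1
  rw [← Nat.cast_le (α := ℤ)]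
  push_cast
  have h2c : ((nbhdSet G I).ncard : ℤ) + ((nbhdSet G I)ᶜ.ncard : ℤ) = (Fintype.card V : ℤ) := by
    rw [← hcw]; exact_mod_cast hcompl
  have h1' : ((coronaSet G).ncard : ℤ) ≤ ((nbhdSet G I)ᶜ.ncard : ℤ) := by exact_mod_cast h1
  have h2' : ((kerSet G).ncard : ℤ) ≤ (I.ncard : ℤ) := by exact_mod_cast h2
  linarith
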